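/- Completeness of petrification: if the program prog is correct, then for every thread limit β the petrified program P_β(prog) satisfies its safety specification S_safe. -/

import Mathlib

/-! Core semantics of the concurrent language with fork/join. -/

namespace Conc

abbrev Var := String
abbrev Val := ℤ
/-- Integer-valued expressions (shallow embedding, evaluated in a combined state). -/
abbrev AExp := (Var → Val) → Val
/-- Boolean-valued expressions. -/
abbrev BExp := (Var → Val) → Prop

/-- Commands of the language, parameterized by the type `T` of thread template names. -/
inductive Cmd (T : Type) where
  | assign : Var → AExp → Cmd T
  | assume_ : BExp → Cmd T
  | assert_ : BExp → Cmd T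
  | ite : BExp → Cmd T → Cmd T → Cmd T
  | while_ : BExp → Cmd T → Cmd T
  | fork : AExp → T → Cmd T
  | join : AExp → Cmd T
  | seq : Cmd T → Cmd T → Cmd T

/-- A remainder program: a command, successful termination `Ω`, or failure `↯`. -/
inductive Rem (T : Type) where
  | run : Cmd T → Rem T
  | term : Rem T   -- Ω
  | fail : Rem T   -- ↯

/-- Sequential composition `C ; X` of a command with a remainder, with `C ; Ω = C`. -/
def Rem.after {T : Type} (C : Cmd T) : Rem T → Rem T
  | .run C' => .run (C.seq C')
  | _ => .run C

/-- A local configuration `⟨X, θ, t, s⟩`. -/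
structure LConf (T : Type) where
  rem : Rem T
  tmpl : T
  tid : Option Val
  st : Var → Val

/-- A program: bodies of thread templates, the main template, and the global variables. -/
structure Prog (T : Type) where
  body : T → Cmd T
  main : T
  isGlobal : Var → Bool

/-- Combined state `s ∪ g`. -/
def Prog.comb {T : Type} (P : Prog T) (g s : Var → Val) : Var → Val :=
  fun x => if P.isGlobal x then g x else s x

/-- Kinds of simple statements labelling a step. -/
inductive Lab (T : Type) where
  | atomic : Lab T
  | forkL : T → Lab T
  | joinL : Lab T

/-- Global configurations: a multiset of local configurations and a global state. -/
abbrev GConf (T : Type) := Multiset (LConf T) × (Var → Val)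

/-- The small-step semantic transition relation. -/
inductive Step {T : Type} (P : Prog T) : Lab T → GConf T → GConf T → Prop where
  | assume_ {e : BExp} {X θ t s g} (h : e (P.comb g s)) :
      Step P .atomic ({⟨Rem.after (.assume_ e) X, θ, t, s⟩}, g) ({⟨X, θ, t, s⟩}, g)
  | assignGlobal {x e X θ t s g} (hx : P.isGlobal x = true) :
      Step P .atomic ({⟨Rem.after (.assign x e) X, θ, t, s⟩}, g)
        ({⟨X, θ, t, s⟩}, Function.update g x (e (P.comb g s)))
  | assignLocal {x e X θ t s g} (hx : P.isGlobal x = false) :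
      Step P .atomic ({⟨Rem.after (.assign x e) X, θ, t, s⟩}, g)
        ({⟨X, θ, t, Function.update s x (e (P.comb g s))⟩}, g)
  | assert₁ {e : BExp} {X θ t s g} (h : e (P.comb g s)) :
      Step P .atomic ({⟨Rem.after (.assert_ e) X, θ, t, s⟩}, g) ({⟨X, θ, t, s⟩}, g)
  | assert₂ {e : BExp} {X θ t s g} (h : ¬ e (P.comb g s)) :
      Step P .atomic ({⟨Rem.after (.assert_ e) X, θ, t, s⟩}, g) ({⟨.fail, θ, t, s⟩}, g)
  | ite₁ {e C₁ C₂ X θ t s g} (h : e (P.comb g s)) :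
      Step P .atomic ({⟨Rem.after (.ite e C₁ C₂) X, θ, t, s⟩}, g)
        ({⟨Rem.after C₁ X, θ, t, s⟩}, g)
  | ite₂ {e C₁ C₂ X θ t s g} (h : ¬ e (P.comb g s)) :
      Step P .atomic ({⟨Rem.after (.ite e C₁ C₂) X, θ, t, s⟩}, g)
        ({⟨Rem.after C₂ X, θ, t, s⟩}, g)
  | while₁ {e C X θ t s g} (h : e (P.comb g s)) :
      Step P .atomic ({⟨Rem.after (.while_ e C) X, θ, t, s⟩}, g)
        ({⟨Rem.after C (Rem.after (.while_ e C) X), θ, t, s⟩}, g)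
  | while₂ {e C X θ t s g} (h : ¬ e (P.comb g s)) :
      Step P .atomic ({⟨Rem.after (.while_ e C) X, θ, t, s⟩}, g) ({⟨X, θ, t, s⟩}, g)
  | fork {e θ' X θ t s s' g} :
      Step P (.forkL θ') ({⟨Rem.after (.fork e θ') X, θ, t, s⟩}, g)
        ({⟨X, θ, t, s⟩, ⟨.run (P.body θ'), θ', some (e (P.comb g s)), s'⟩}, g)
  | join {e X θ t s θ' s' g} :
      Step P .joinL
        ({⟨Rem.after (.join e) X, θ, t, s⟩, ⟨.term, θ', some (e (P.comb g s)), s'⟩}, g)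
        ({⟨X, θ, t, s⟩}, g)
  | frame {l M₁ M₁' M₂ g g'} :
      Step P l (M₁, g) (M₁', g') → Step P l (M₁ + M₂, g) (M₁' + M₂, g')

/-- Initial global configurations. -/
def IsInit {T : Type} (P : Prog T) (c : GConf T) : Prop :=
  ∃ s, c.1 = {⟨.run (P.body P.main), P.main, none, s⟩}

/-- `cfg 0 → cfg 1 → … → cfg n` is an execution with statement kinds `lab`. -/
def IsExec {T : Type} (P : Prog T) (n : ℕ) (cfg : ℕ → GConf T) (lab : ℕ → Lab T) : Prop :=
  IsInit P (cfg 0) ∧ ∀ i < n, Step P (lab i) (cfg i) (cfg (i + 1))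

/-- The number of local configurations with thread template `θ` in `M`. -/
def tmplCount {T : Type} [DecidableEq T] (M : Multiset (LConf T)) (θ : T) : ℕ :=
  Multiset.card (M.filter (fun c => c.tmpl = θ))

/-- The thread width of the program `P` is at most `β`. -/
def WidthLe {T : Type} [DecidableEq T] (P : Prog T) (β : ℕ) : Prop :=
  ∀ n cfg lab, IsExec P n cfg lab → ∀ i ≤ n, ∀ θ, tmplCount (cfg i).1 θ ≤ β

/-- `P` is correct: no execution reaches the failure marker `↯`. -/
def Correct {T : Type} (P : Prog T) : Prop :=
  ¬ ∃ n cfg lab, IsExec P n cfg lab ∧ ∃ i ≤ n, ∃ c ∈ (cfg i).1, c.rem = Rem.fail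

end Conc

/-! Petrification: the petrified program `P_β(prog)` as a Petri program. -/

namespace Conc

/-- Places of the petrified program with thread limit `β`. -/
inductive PPlace (T : Type) (β : ℕ) where
  | loc : Rem T → T → Option (Fin β) → PPlace T β
  | inUse : T → Fin β → PPlace T β
  | notInUse : T → Fin β → PPlace T β
  | insuff : T → PPlace T β

/-- Instantiated variables of the petrified program. -/
inductive IVar (T : Type) (β : ℕ) where
  | glob : Var → IVar T β
  | inst : Var → T → Option (Fin β) → IVar T β
  | idv : T → Fin β → IVar T β
deriving DecidableEq

/-- States of the petrified (Petri) program. -/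
abbrev IState (T : Type) (β : ℕ) := IVar T β → Val

/-- De-instantiated view of an instantiated state for thread instance `(θ, k)`. -/
def iev {T : Type} {β : ℕ} (P : Prog T) (σ : IState T β) (θ : T) (k : Option (Fin β)) :
    Var → Val :=
  fun x => if P.isGlobal x then σ (.glob x) else σ (.inst x θ k)

/-- Semantics of the instantiated assignment `[x := e]_{θ,k}`. -/
def assignRel {T : Type} {β : ℕ} [DecidableEq T] (P : Prog T) (x : Var) (e : AExp)
    (θ : T) (k : Option (Fin β)) : IState T β → IState T β → Prop :=
  fun σ σ' =>
    σ' = if P.isGlobal x then Function.update σ (.glob x) (e (iev P σ θ k))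
         else Function.update σ (.inst x θ k) (e (iev P σ θ k))

/-- Semantics of the instantiated statement `[assume e]_{θ,k}`. -/
def assumeRel {T : Type} {β : ℕ} (P : Prog T) (e : BExp) (θ : T) (k : Option (Fin β)) :
    IState T β → IState T β → Prop :=
  fun σ σ' => σ' = σ ∧ e (iev P σ θ k)

/-- Semantics of the fork label `id_{θ'}^{k'} := [e]_{θ,k}`. -/
def forkRel {T : Type} {β : ℕ} [DecidableEq T] (P : Prog T) (e : AExp)
    (θ : T) (k : Option (Fin β)) (θ' : T) (k' : Fin β) : IState T β → IState T β → Prop :=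
  fun σ σ' => σ' = Function.update σ (.idv θ' k') (e (iev P σ θ k))

/-- Semantics of the join label `assume id_{θ'}^{k'} == [e]_{θ,k}`. -/
def joinRel {T : Type} {β : ℕ} (P : Prog T) (e : AExp)
    (θ : T) (k : Option (Fin β)) (θ' : T) (k' : Fin β) : IState T β → IState T β → Prop :=
  fun σ σ' => σ' = σ ∧ σ (.idv θ' k') = e (iev P σ θ k)

/-- The control-flow relation of petrification: `pre ⟶[R] post`, where transitions are
labelled with the semantic relation `R` of their instantiated simple statement. -/
inductive PTrans {T : Type} {β : ℕ} [DecidableEq T] (P : Prog T) :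
    Set (PPlace T β) → (IState T β → IState T β → Prop) → Set (PPlace T β) → Prop where
  | assume_ (e : BExp) (X : Rem T) (θ : T) (k : Option (Fin β)) :
      PTrans P {.loc (Rem.after (.assume_ e) X) θ k} (assumeRel P e θ k) {.loc X θ k}
  | assign (x : Var) (e : AExp) (X : Rem T) (θ : T) (k : Option (Fin β)) :
      PTrans P {.loc (Rem.after (.assign x e) X) θ k} (assignRel P x e θ k) {.loc X θ k}
  | assert₁ (e : BExp) (X : Rem T) (θ : T) (k : Option (Fin β)) :
      PTrans P {.loc (Rem.after (.assert_ e) X) θ k} (assumeRel P e θ k) {.loc X θ k}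
  | assert₂ (e : BExp) (X : Rem T) (θ : T) (k : Option (Fin β)) :
      PTrans P {.loc (Rem.after (.assert_ e) X) θ k}
        (assumeRel P (fun v => ¬ e v) θ k) {.loc Rem.fail θ k}
  | ite₁ (e : BExp) (C₁ C₂ : Cmd T) (X : Rem T) (θ : T) (k : Option (Fin β)) :
      PTrans P {.loc (Rem.after (.ite e C₁ C₂) X) θ k} (assumeRel P e θ k)
        {.loc (Rem.after C₁ X) θ k}
  | ite₂ (e : BExp) (C₁ C₂ : Cmd T) (X : Rem T) (θ : T) (k : Option (Fin β)) :
      PTrans P {.loc (Rem.after (.ite e C₁ C₂) X) θ k} (assumeRel P (fun v => ¬ e v) θ k)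
        {.loc (Rem.after C₂ X) θ k}
  | while₁ (e : BExp) (C : Cmd T) (X : Rem T) (θ : T) (k : Option (Fin β)) :
      PTrans P {.loc (Rem.after (.while_ e C) X) θ k} (assumeRel P e θ k)
        {.loc (Rem.after C (Rem.after (.while_ e C) X)) θ k}
  | while₂ (e : BExp) (C : Cmd T) (X : Rem T) (θ : T) (k : Option (Fin β)) :
      PTrans P {.loc (Rem.after (.while_ e C) X) θ k} (assumeRel P (fun v => ¬ e v) θ k)
        {.loc X θ k}
  | fork (e : AExp) (θ' : T) (X : Rem T) (θ : T) (k : Option (Fin β)) (k' : Fin β) :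
      PTrans P
        ({.loc (Rem.after (.fork e θ') X) θ k, .notInUse θ' k'} ∪
          (PPlace.inUse θ') '' {j | j < k'})
        (forkRel P e θ k θ' k')
        ({.loc X θ k, .loc (.run (P.body θ')) θ' (some k'), .inUse θ' k'} ∪
          (PPlace.inUse θ') '' {j | j < k'})
  | insufficiency (e : AExp) (θ' : T) (X : Rem T) (θ : T) (k : Option (Fin β)) :
      PTrans P
        ({.loc (Rem.after (.fork e θ') X) θ k} ∪ (PPlace.inUse θ') '' Set.univ)
        (fun σ σ' => σ' = σ)
        {.insuff θ'}
  | join (e : AExp) (X : Rem T) (θ : T) (k : Option (Fin β)) (θ' : T) (k' : Fin β) :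
      PTrans P {.loc (Rem.after (.join e) X) θ k, .loc Rem.term θ' (some k'), .inUse θ' k'}
        (joinRel P e θ k θ' k')
        {.loc X θ k, .notInUse θ' k'}

/-- Initial marking of the petrified program. -/
def initMark {T : Type} (P : Prog T) (β : ℕ) : Set (PPlace T β) :=
  {PPlace.loc (.run (P.body P.main)) P.main none} ∪ {p | ∃ θ k, p = PPlace.notInUse θ k}

/-- Reachability of a marking together with a semantically consistent state
(markings of the 1-safe petrified program are identified with sets of places). -/
inductive PReach {T : Type} [DecidableEq T] (P : Prog T) (β : ℕ) :
    Set (PPlace T β) → IState T β → Prop where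
  | init (σ : IState T β) : PReach P β (initMark P β) σ
  | step {m σ pre R post σ'} : PReach P β m σ → PTrans P pre R post → pre ⊆ m →
      R σ σ' → PReach P β ((m \ pre) ∪ post) σ'

/-- The petrified program satisfies the specification `S` (a set of bad places):
no semantically executable firing sequence reaches a marking intersecting `S`. -/
def Satisfies {T : Type} [DecidableEq T] (P : Prog T) (β : ℕ) (S : Set (PPlace T β)) : Prop :=
  ¬ ∃ m σ, PReach P β m σ ∧ (m ∩ S).Nonempty

/-- The safety specification `S_safe`. -/
def Ssafe (T : Type) (β : ℕ) : Set (PPlace T β) :=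
  {p | ∃ θ k, p = PPlace.loc Rem.fail θ k}

/-- The bound specification `S_bound`. -/
def Sbound (T : Type) (β : ℕ) : Set (PPlace T β) :=
  {p | ∃ θ, p = PPlace.insuff θ}

end Conc

namespace Conc

set_option linter.unusedSectionVars false

variable {T : Type} [DecidableEq T] {β : ℕ}

/-- Auxiliary: reachable global configurations of `P`. -/
inductive Reach (P : Prog T) : GConf T → Prop where
  | init (s g) : Reach P ({⟨.run (P.body P.main), P.main, none, s⟩}, g)
  | step {c c' : GConf T} {l : Lab T} : Reach P c → Step P l c c' → Reach P c'

lemma Reach.exec {P : Prog T} {c : GConf T} (h : Reach P c) :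
    ∃ n cfg lab, IsExec P n cfg lab ∧ cfg n = c := by
  induction h with
  | init s g =>
      exact ⟨0, fun _ => ({⟨.run (P.body P.main), P.main, none, s⟩}, g),
        fun _ => .atomic, ⟨⟨s, rfl⟩, fun i hi => absurd hi (Nat.not_lt_zero i)⟩, rfl⟩
  | @step c c' l _ hs ih =>
      obtain ⟨n, cfg, lab, ⟨hinit, hstep⟩, hend⟩ := ih
      refine ⟨n + 1, fun i => if i ≤ n then cfg i else c',
        fun i => if i < n then lab i else l, ⟨?_, ?_⟩, ?_⟩
      · simpa using hinit
      · intro i hi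
        rcases lt_or_ge i n with hlt | hge
        · have h1 : i ≤ n := hlt.le
          have h2 : i + 1 ≤ n := hlt
          simp only [h1, h2, if_pos, hlt, if_pos]
          exact hstep i hlt
        · have hin : i = n := le_antisymm (Nat.lt_succ_iff.mp hi) hge
          subst hin
          simpa [Nat.not_succ_le_self, hend] using hs
      · simp

lemma Reach.no_fail {P : Prog T} (hc : Correct P) {M : Multiset (LConf T)}
    {g : Var → Val} (h : Reach P (M, g)) {c : LConf T} (hm : c ∈ M)
    (hf : c.rem = Rem.fail) : False := by
  obtain ⟨n, cfg, lab, hexec, hend⟩ := h.exec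
  exact hc ⟨n, cfg, lab, hexec, n, le_refl n, c, by rw [hend]; exact hm, hf⟩

/-- The local configuration corresponding to instance `(θ, k)` at remainder `X`
under instantiated state `σ`. -/
def thr (σ : IState T β) (X : Rem T) (θ : T) (k : Option (Fin β)) : LConf T :=
  ⟨X, θ, k.map (fun k' => σ (.idv θ k')), fun x => σ (.inst x θ k)⟩

lemma thr_update_glob {σ : IState T β} {x : Var} {v : Val} (Y : Rem T) (θ₂ : T)
    (k₂ : Option (Fin β)) :
    thr (Function.update σ (.glob x) v) Y θ₂ k₂ = thr σ Y θ₂ k₂ := by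
  unfold thr
  refine congrArg₂ _ ?_ ?_
  · cases k₂ with
    | none => rfl
    | some j => simp [Function.update]
  · funext y; simp [Function.update]

lemma thr_update_inst {σ : IState T β} {x : Var} {θ : T} {k : Option (Fin β)} {v : Val}
    (Y : Rem T) (θ₂ : T) (k₂ : Option (Fin β)) (h : (θ₂, k₂) ≠ (θ, k)) :
    thr (Function.update σ (.inst x θ k) v) Y θ₂ k₂ = thr σ Y θ₂ k₂ := by
  unfold thr
  refine congrArg₂ _ ?_ ?_
  · cases k₂ with
    | none => rfl
    | some j => simp [Function.update]
  · funext y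
    have : (IVar.inst y θ₂ k₂ : IVar T β) ≠ .inst x θ k := by
      intro he
      injection he with h1 h2 h3
      exact h (by rw [h2, h3])
    simp [Function.update, this]

lemma thr_update_idv {σ : IState T β} {θ' : T} {k' : Fin β} {v : Val}
    (Y : Rem T) (θ₂ : T) (k₂ : Option (Fin β)) (h : (θ₂, k₂) ≠ (θ', some k')) :
    thr (Function.update σ (.idv θ' k') v) Y θ₂ k₂ = thr σ Y θ₂ k₂ := by
  unfold thr
  refine congrArg₂ _ ?_ ?_
  · cases k₂ with
    | none => rfl
    | some j =>
        have : (IVar.idv θ₂ j : IVar T β) ≠ .idv θ' k' := by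
          intro he
          injection he with h1 h2
          exact h (by rw [h1, h2])
        simp only [Option.map_some, Function.update_of_ne this]
  · funext y; simp [Function.update]

lemma comb_iev {P : Prog T} {σ : IState T β} {g : Var → Val} {θ : T}
    {k : Option (Fin β)} (hg : ∀ x, P.isGlobal x = true → g x = σ (.glob x)) :
    P.comb g (fun x => σ (.inst x θ k)) = iev P σ θ k := by
  funext x
  unfold Prog.comb iev
  by_cases hx : P.isGlobal x
  · simp [hx, hg x hx]
  · simp [hx]

lemma _root_.Conc.Rem.after_ne_term {C : Cmd T} {X : Rem T} :
    Rem.after C X ≠ Rem.term := by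
  cases X <;> simp [Rem.after]

/-- The simulation invariant: the marking `m` together with state `σ` is matched by a
reachable configuration of `P`. -/
def Inv (P : Prog T) (β : ℕ) (m : Set (PPlace T β)) (σ : IState T β) : Prop :=
  ∃ (S : Finset (T × Option (Fin β))) (F : T × Option (Fin β) → Rem T)
    (rest : Multiset (LConf T)) (g : Var → Val),
    Reach P (S.val.map (fun p => thr σ (F p) p.1 p.2) + rest, g) ∧
    (∀ x, P.isGlobal x = true → g x = σ (.glob x)) ∧
    (∀ (X : Rem T) θ k, PPlace.loc X θ k ∈ m ↔ ((θ, k) ∈ S ∧ F (θ, k) = X)) ∧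
    (∀ θ k', (θ, some k') ∈ S → PPlace.notInUse θ k' ∉ m)

lemma map_erase_eq {S : Finset (T × Option (Fin β))} {p : T × Option (Fin β)}
    (f f' : T × Option (Fin β) → LConf T)
    (hf : ∀ q ∈ S.val.erase p, f' q = f q) :
    (S.val.erase p).map f' = (S.val.erase p).map f :=
  Multiset.map_congr rfl hf

/-- Helper: invariant preservation for transitions that touch a single instance
`(θ, k)`, consuming `loc A θ k` and producing `loc B θ k`. -/
lemma inv_atomic {P : Prog T} {m : Set (PPlace T β)} {σ σ' : IState T β}
    (hInv : Inv P β m σ) (A B : Rem T) (θ : T) (k : Option (Fin β))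
    (hpre : PPlace.loc A θ k ∈ m)
    (hag : ∀ (Y : Rem T) θ₂ k₂, (θ₂, k₂) ≠ (θ, k) → thr σ' Y θ₂ k₂ = thr σ Y θ₂ k₂)
    (hstep : ∀ g : Var → Val, (∀ x, P.isGlobal x = true → g x = σ (.glob x)) →
      ∃ (l : Lab T) (g' : Var → Val),
        Step P l ({thr σ A θ k}, g) ({thr σ' B θ k}, g') ∧
        (∀ x, P.isGlobal x = true → g' x = σ' (.glob x))) :
    Inv P β ((m \ {PPlace.loc A θ k}) ∪ {PPlace.loc B θ k}) σ' := by
  obtain ⟨S, F, rest, g, hReach, hg, h1, h3⟩ := hInv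
  obtain ⟨hS, hF⟩ := (h1 A θ k).mp hpre
  obtain ⟨l, g', hstep', hg'⟩ := hstep g hg
  set F' : T × Option (Fin β) → Rem T := Function.update F (θ, k) B with hF'def
  refine ⟨S, F', rest, g', ?_, hg', ?_, ?_⟩
  · -- Reachability of the new configuration
    have hmem : (θ, k) ∈ S.val := hS
    have hsplit : S.val = (θ, k) ::ₘ S.val.erase (θ, k) := (Multiset.cons_erase hmem).symm
    have herne : ∀ q ∈ S.val.erase (θ, k), q ≠ (θ, k) := by
      intro q hq
      exact ((Multiset.Nodup.mem_erase_iff S.nodup).mp hq).1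
    have hmapeq : (S.val.erase (θ, k)).map (fun p => thr σ' (F' p) p.1 p.2)
        = (S.val.erase (θ, k)).map (fun p => thr σ (F p) p.1 p.2) := by
      refine Multiset.map_congr rfl ?_
      intro q hq
      have hqne := herne q hq
      rw [hF'def, Function.update_of_ne hqne, hag (F q) q.1 q.2 (by simpa using hqne)]
    have hold : S.val.map (fun p => thr σ (F p) p.1 p.2) + rest
        = thr σ A θ k ::ₘ ((S.val.erase (θ, k)).map (fun p => thr σ (F p) p.1 p.2) + rest) := by
      conv_lhs => rw [hsplit]
      rw [Multiset.map_cons, hF, Multiset.cons_add]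
    have hnew : S.val.map (fun p => thr σ' (F' p) p.1 p.2) + rest
        = thr σ' B θ k ::ₘ ((S.val.erase (θ, k)).map (fun p => thr σ (F p) p.1 p.2) + rest) := by
      conv_lhs => rw [hsplit]
      rw [Multiset.map_cons, hmapeq, Multiset.cons_add]
      congr 2
      rw [hF'def]; simp
    rw [hnew]
    have := Step.frame (P := P)
      (M₂ := (S.val.erase (θ, k)).map (fun p => thr σ (F p) p.1 p.2) + rest) hstep'
    rw [Multiset.singleton_add, Multiset.singleton_add] at this
    rw [← hold] at this
    exact hReach.step this
  · -- Place correspondence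
    intro Y θ₂ k₂
    by_cases hp : (θ₂, k₂) = (θ, k)
    · obtain ⟨hpt, hpk⟩ := Prod.mk.injEq .. ▸ hp
      subst hpt; subst hpk
      constructor
      · rintro (⟨hm, hne⟩ | hpost)
        · exfalso
          have := ((h1 Y θ₂ k₂).mp hm).2
          rw [hF] at this
          exact hne (by simp [Set.mem_singleton_iff, ← this])
        · simp only [Set.mem_singleton_iff] at hpost
          injection hpost with e1 e2 e3
          exact ⟨hS, by rw [hF'def]; simp [e1]⟩
      · rintro ⟨-, hFY⟩
        right
        rw [hF'def] at hFY
        simp only [Function.update_self] at hFY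
        simp [Set.mem_singleton_iff, hFY]
    · have hFeq : F' (θ₂, k₂) = F (θ₂, k₂) := Function.update_of_ne hp B F
      constructor
      · rintro (⟨hm, -⟩ | hpost)
        · rw [hFeq]; exact (h1 Y θ₂ k₂).mp hm
        · exfalso
          simp only [Set.mem_singleton_iff] at hpost
          injection hpost with e1 e2 e3
          exact hp (by rw [e2, e3])
      · rintro ⟨hSm, hFY⟩
        left
        refine ⟨(h1 Y θ₂ k₂).mpr ⟨hSm, by rw [← hFeq]; exact hFY⟩, ?_⟩
        simp only [Set.mem_singleton_iff]
        intro he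
        injection he with e1 e2 e3
        exact hp (by rw [e2, e3])
  · -- notInUse freshness
    intro θ₂ k₂ hSm
    have := h3 θ₂ k₂ hSm
    rintro (⟨hm, -⟩ | hpost)
    · exact this hm
    · simp at hpost

/-- Every semantically reachable marking of the petrified program satisfies the
simulation invariant. -/
lemma preach_inv {P : Prog T} {m : Set (PPlace T β)} {σ : IState T β}
    (h : PReach P β m σ) : Inv P β m σ := by
  induction h with
  | init σ =>
      refine ⟨{(P.main, none)}, fun _ => .run (P.body P.main),
        0, fun x => σ (.glob x), ?_, fun x _ => rfl, ?_, ?_⟩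
      · have : ({(P.main, (none : Option (Fin β)))} : Finset _).val.map
            (fun p => thr σ (.run (P.body P.main)) p.1 p.2) + 0
            = {⟨.run (P.body P.main), P.main, none, fun x => σ (.inst x P.main none)⟩} := by
          simp [thr]
        rw [this]
        exact Reach.init _ _
      · intro X θ k
        constructor
        · rintro (h | ⟨θ', k', h⟩)
          · simp only [Set.mem_singleton_iff] at h
            injection h with e1 e2 e3
            exact ⟨by simp [e2, e3], e1.symm⟩
          · exact absurd h (by intro he; cases he)
        · rintro ⟨hSm, hFY⟩
          simp only [Finset.mem_singleton, Prod.mk.injEq] at hSm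
          left
          simp [Set.mem_singleton_iff, hSm.1, hSm.2, ← hFY]
      · intro θ k' h
        simp at h
  | @step m σ pre R post σ' _ htrans hsub hR ih =>
      cases htrans with
      | assume_ e X θ k =>
          obtain ⟨hσ', he⟩ := hR
          subst hσ'
          refine inv_atomic ih _ _ θ k (hsub rfl) (fun _ _ _ _ => rfl) ?_
          intro g hg
          refine ⟨.atomic, g, ?_, hg⟩
          exact Step.assume_ (by rw [comb_iev hg]; exact he)
      | assign x e X θ k =>
          rw [assignRel] at hR
          by_cases hx : P.isGlobal x
          · rw [if_pos hx] at hR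
            subst hR
            refine inv_atomic ih _ _ θ k (hsub rfl)
              (fun Y θ₂ k₂ _ => thr_update_glob Y θ₂ k₂) ?_
            intro g hg
            refine ⟨.atomic, Function.update g x (e (iev P σ θ k)), ?_, ?_⟩
            · rw [thr_update_glob]
              have := Step.assignGlobal (P := P) (x := x) (e := e) (X := X) (θ := θ)
                (t := k.map (fun k' => σ (.idv θ k')))
                (s := fun y => σ (.inst y θ k)) (g := g) hx
              rwa [comb_iev hg] at this
            · intro y hy
              by_cases hyx : y = x
              · subst hyx; simp [Function.update]
              · simp [Function.update, hyx, hg y hy]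
          · rw [if_neg hx] at hR
            subst hR
            refine inv_atomic ih _ _ θ k (hsub rfl)
              (fun Y θ₂ k₂ hne => thr_update_inst Y θ₂ k₂ hne) ?_
            intro g hg
            refine ⟨.atomic, g, ?_, ?_⟩
            · have := Step.assignLocal (P := P) (x := x) (e := e) (X := X) (θ := θ)
                (t := k.map (fun k' => σ (.idv θ k')))
                (s := fun y => σ (.inst y θ k)) (g := g) (by simpa using hx)
              rw [comb_iev hg] at this
              convert this using 3
              rfl
              unfold thr
              refine congrArg₂ _ ?_ ?_
              · cases k with
                | none => rfl
                | some j => simp [Function.update]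
              · funext y
                by_cases hyx : y = x
                · subst hyx; simp [Function.update]
                · have : (IVar.inst y θ k : IVar T β) ≠ .inst x θ k := by
                    intro he'; injection he' with a1 a2 a3; exact hyx a1
                  simp [Function.update, this, hyx]
            · intro y hy
              have : (IVar.glob y : IVar T β) ≠ .inst x θ k := by intro he'; cases he'
              simp [Function.update, this, hg y hy]
      | assert₁ e X θ k =>
          obtain ⟨hσ', he⟩ := hR
          subst hσ'
          refine inv_atomic ih _ _ θ k (hsub rfl) (fun _ _ _ _ => rfl) ?_
          intro g hg
          exact ⟨.atomic, g, Step.assert₁ (by rw [comb_iev hg]; exact he), hg⟩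
      | assert₂ e X θ k =>
          obtain ⟨hσ', he⟩ := hR
          subst hσ'
          refine inv_atomic ih _ _ θ k (hsub rfl) (fun _ _ _ _ => rfl) ?_
          intro g hg
          exact ⟨.atomic, g, Step.assert₂ (by rw [comb_iev hg]; exact he), hg⟩
      | ite₁ e C₁ C₂ X θ k =>
          obtain ⟨hσ', he⟩ := hR
          subst hσ'
          refine inv_atomic ih _ _ θ k (hsub rfl) (fun _ _ _ _ => rfl) ?_
          intro g hg
          exact ⟨.atomic, g, Step.ite₁ (by rw [comb_iev hg]; exact he), hg⟩
      | ite₂ e C₁ C₂ X θ k =>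
          obtain ⟨hσ', he⟩ := hR
          subst hσ'
          refine inv_atomic ih _ _ θ k (hsub rfl) (fun _ _ _ _ => rfl) ?_
          intro g hg
          exact ⟨.atomic, g, Step.ite₂ (by rw [comb_iev hg]; exact he), hg⟩
      | while₁ e C X θ k =>
          obtain ⟨hσ', he⟩ := hR
          subst hσ'
          refine inv_atomic ih _ _ θ k (hsub rfl) (fun _ _ _ _ => rfl) ?_
          intro g hg
          exact ⟨.atomic, g, Step.while₁ (by rw [comb_iev hg]; exact he), hg⟩
      | while₂ e C X θ k =>
          obtain ⟨hσ', he⟩ := hR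
          subst hσ'
          refine inv_atomic ih _ _ θ k (hsub rfl) (fun _ _ _ _ => rfl) ?_
          intro g hg
          exact ⟨.atomic, g, Step.while₂ (by rw [comb_iev hg]; exact he), hg⟩
      | fork e θ' X θ k k' =>
          obtain ⟨S, F, rest, g, hReach, hg, h1, h3⟩ := ih
          rw [forkRel] at hR
          subst hR
          have hlocm : PPlace.loc (Rem.after (.fork e θ') X) θ k ∈ m :=
            hsub (Or.inl (Or.inl rfl))
          have hniu : PPlace.notInUse θ' k' ∈ m := hsub (Or.inl (Or.inr rfl))
          obtain ⟨hS, hF⟩ := (h1 _ θ k).mp hlocm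
          have hfresh : (θ', some k') ∉ S := fun h => h3 θ' k' h hniu
          have hne : (θ, k) ≠ (θ', some k') := fun h => hfresh (h ▸ hS)
          set F' : T × Option (Fin β) → Rem T :=
            Function.update (Function.update F (θ, k) X) (θ', some k')
              (.run (P.body θ')) with hF'def
          refine ⟨insert (θ', some k') S, F', rest, g, ?_, ?_, ?_, ?_⟩
          · -- reachability
            have hins : (insert (θ', some k') S).val = (θ', some k') ::ₘ S.val :=
              Finset.insert_val_of_notMem hfresh
            have hsplit : S.val = (θ, k) ::ₘ S.val.erase (θ, k) :=
              (Multiset.cons_erase hS).symm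
            set v := e (iev P σ θ k) with hv
            set σ' := Function.update σ (.idv θ' k') v with hσ'
            set E := S.val.erase (θ, k) with hE
            set M₂ := E.map (fun p => thr σ (F p) p.1 p.2) + rest with hM₂
            have hEq : ∀ q ∈ E, thr σ' (F' q) q.1 q.2 = thr σ (F q) q.1 q.2 := by
              intro q hq
              have hq1 : q ≠ (θ, k) :=
                ((Multiset.Nodup.mem_erase_iff S.nodup).mp hq).1
              have hq2 : q ≠ (θ', some k') := by
                intro h; exact hfresh (h ▸ (Multiset.mem_of_mem_erase hq))
              rw [hF'def, Function.update_of_ne hq2, Function.update_of_ne hq1,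
                hσ', thr_update_idv _ _ _ (by simpa using hq2)]
            have hf'θk : F' (θ, k) = X := by
              rw [hF'def, Function.update_of_ne hne, Function.update_self]
            have hMold : S.val.map (fun p => thr σ (F p) p.1 p.2) + rest
                = (⟨Rem.after (.fork e θ') X, θ, k.map (fun j => σ (.idv θ j)),
                    fun x => σ (.inst x θ k)⟩ : LConf T) ::ₘ M₂ := by
              conv_lhs => rw [hsplit]
              rw [Multiset.map_cons, hF, Multiset.cons_add]
              rfl
            have hMnew : (insert (θ', some k') S).val.map
                  (fun p => thr σ' (F' p) p.1 p.2) + rest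
                = thr σ' (.run (P.body θ')) θ' (some k') ::ₘ thr σ X θ k ::ₘ M₂ := by
              rw [hins]
              conv_lhs => rw [Multiset.map_cons, hsplit, Multiset.map_cons]
              rw [Multiset.map_congr rfl hEq, hf'θk,
                thr_update_idv X θ k hne, Multiset.cons_add, Multiset.cons_add]
              rw [hF'def]
              simp only [Function.update_self]
              rfl
            have hb : thr σ' (.run (P.body θ')) θ' (some k')
                = (⟨.run (P.body θ'), θ', some (e (P.comb g (fun x => σ (.inst x θ k)))),
                    fun x => σ (.inst x θ' (some k'))⟩ : LConf T) := by
              unfold thr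
              refine congrArg₂ _ ?_ ?_
              · rw [hσ']
                simp [comb_iev hg, hv]
              · funext y
                rw [hσ']
                have : (IVar.inst y θ' (some k') : IVar T β) ≠ .idv θ' k' := by
                  intro h; cases h
                simp [Function.update_of_ne this]
            have hpair : thr σ' (.run (P.body θ')) θ' (some k') ::ₘ thr σ X θ k ::ₘ M₂
                = (⟨X, θ, k.map (fun j => σ (.idv θ j)),
                    fun x => σ (.inst x θ k)⟩ : LConf T) ::ₘ
                  (⟨.run (P.body θ'), θ', some (e (P.comb g (fun x => σ (.inst x θ k)))),
                    fun x => σ (.inst x θ' (some k'))⟩ : LConf T) ::ₘ M₂ := by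
              rw [hb, Multiset.cons_swap]
              rfl
            rw [hMnew, hpair]
            refine Reach.step (l := .forkL θ') hReach ?_
            rw [hMold]
            have hstep0 := Step.fork (P := P) (e := e) (θ' := θ') (X := X) (θ := θ)
              (t := k.map fun j => σ (.idv θ j)) (s := fun x => σ (.inst x θ k))
              (s' := fun x => σ (.inst x θ' (some k'))) (g := g)
            have hstep1 := Step.frame (M₂ := M₂) hstep0
            simpa [Multiset.insert_eq_cons, Multiset.cons_add,
              Multiset.singleton_add] using hstep1
          · -- global agreement
            intro x hx
            rw [hg x hx]
            exact (Function.update_of_ne (by intro h; cases h) _ _).symm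
          · -- place correspondence
            intro Y θ₂ k₂
            by_cases hp2 : (θ₂, k₂) = (θ', some k')
            · rw [show θ₂ = θ' from congrArg Prod.fst hp2,
                show k₂ = some k' from congrArg Prod.snd hp2]
              constructor
              · rintro (⟨hm', -⟩ | hpost)
                · exact absurd ((h1 _ _ _).mp hm').1 hfresh
                · rcases hpost with (h | h | h) | ⟨j, -, h⟩
                  · exfalso
                    injection h with e1 e2 e3
                    exact hne (by rw [e2, e3])
                  · injection h with e1 e2 e3
                    exact ⟨Finset.mem_insert_self _ _, by
                      rw [hF'def, Function.update_self, e1]⟩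
                  · exact absurd h (by simp)
                  · exact absurd h (by simp)
              · rintro ⟨-, hFY⟩
                rw [hF'def, Function.update_self] at hFY
                have he : PPlace.loc Y θ' (some k')
                    = PPlace.loc (.run (P.body θ')) θ' (some k') := by rw [← hFY]
                exact Or.inr (Or.inl (Or.inr (Or.inl he)))
            · by_cases hp1 : (θ₂, k₂) = (θ, k)
              · rw [show θ₂ = θ from congrArg Prod.fst hp1,
                  show k₂ = k from congrArg Prod.snd hp1]
                constructor
                · rintro (⟨hm', hnp⟩ | hpost)
                  · exfalso
                    have h2 := ((h1 _ _ _).mp hm').2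
                    rw [hF] at h2
                    have he : PPlace.loc Y θ k
                        = PPlace.loc (Rem.after (.fork e θ') X) θ k := by rw [h2]
                    exact hnp (Or.inl (Or.inl he))
                  · rcases hpost with (h | h | h) | ⟨j, -, h⟩
                    · injection h with e1 e2 e3
                      exact ⟨Finset.mem_insert_of_mem hS, by
                        rw [hF'def, Function.update_of_ne hne, Function.update_self, e1]⟩
                    · exfalso
                      injection h with e1 e2 e3
                      exact hne (by rw [e2, e3])
                    · exact absurd h (by simp)
                    · exact absurd h (by simp)
                · rintro ⟨-, hFY⟩
                  rw [hF'def, Function.update_of_ne hne, Function.update_self] at hFY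
                  have he : PPlace.loc Y θ k = PPlace.loc X θ k := by rw [← hFY]
                  exact Or.inr (Or.inl (Or.inl he))
              · have hFeq : F' (θ₂, k₂) = F (θ₂, k₂) := by
                  rw [hF'def, Function.update_of_ne hp2, Function.update_of_ne hp1]
                constructor
                · rintro (⟨hm', -⟩ | hpost)
                  · obtain ⟨hSm, hFY⟩ := (h1 Y θ₂ k₂).mp hm'
                    exact ⟨Finset.mem_insert_of_mem hSm, by rw [hFeq]; exact hFY⟩
                  · exfalso
                    rcases hpost with (h | h | h) | ⟨j, -, h⟩
                    · injection h with e1 e2 e3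
                      exact hp1 (by rw [e2, e3])
                    · injection h with e1 e2 e3
                      exact hp2 (by rw [e2, e3])
                    · exact absurd h (by simp)
                    · exact absurd h (by simp)
                · rintro ⟨hSm, hFY⟩
                  left
                  rcases Finset.mem_insert.mp hSm with he | hSm'
                  · exact absurd he hp2
                  refine ⟨(h1 Y θ₂ k₂).mpr ⟨hSm', by rw [← hFeq]; exact hFY⟩, ?_⟩
                  rintro ((h | h) | ⟨j, -, h⟩)
                  · injection h with e1 e2 e3
                    exact hp1 (by rw [e2, e3])
                  · exact absurd h (by simp)
                  · exact absurd h (by simp)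
          · -- notInUse freshness
            intro θ₂ k₂ hmem2
            rintro (⟨hm2, hnp⟩ | hpost)
            · rcases Finset.mem_insert.mp hmem2 with he | hSm
              · have e1 : θ₂ = θ' := congrArg Prod.fst he
                have e2 : (some k₂ : Option (Fin β)) = some k' := congrArg Prod.snd he
                injection e2 with e2
                refine hnp (Or.inl (Or.inr ?_))
                rw [e1, e2]
                rfl
              · exact h3 θ₂ k₂ hSm hm2
            · rcases hpost with (h | h | h) | ⟨j, -, h⟩
              · exact absurd h (by simp)
              · exact absurd h (by simp)
              · exact absurd h (by simp)
              · exact absurd h (by simp)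
      | insufficiency e θ' X θ k =>
          obtain ⟨S, F, rest, g, hReach, hg, h1, h3⟩ := ih
          rw [show σ' = σ from hR]
          have hlocm : PPlace.loc (Rem.after (.fork e θ') X) θ k ∈ m :=
            hsub (Or.inl rfl)
          obtain ⟨hS, hF⟩ := (h1 _ θ k).mp hlocm
          refine ⟨S.erase (θ, k), F, thr σ (F (θ, k)) θ k ::ₘ rest, g, ?_, hg, ?_, ?_⟩
          · have hsplit : S.val = (θ, k) ::ₘ S.val.erase (θ, k) :=
              (Multiset.cons_erase hS).symm
            have hm : (S.erase (θ, k)).val.map (fun p => thr σ (F p) p.1 p.2)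
                  + (thr σ (F (θ, k)) θ k ::ₘ rest)
                = S.val.map (fun p => thr σ (F p) p.1 p.2) + rest := by
              rw [Finset.erase_val]
              conv_rhs => rw [hsplit, Multiset.map_cons, Multiset.cons_add]
              rw [Multiset.add_cons]
            rw [hm]
            exact hReach
          · intro Y θ₂ k₂
            by_cases hp : (θ₂, k₂) = (θ, k)
            · rw [show θ₂ = θ from congrArg Prod.fst hp, show k₂ = k from congrArg Prod.snd hp]
              constructor
              · rintro (⟨hm', hnp⟩ | hpost)
                · exfalso
                  have h2 := ((h1 _ _ _).mp hm').2
                  rw [hF] at h2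
                  have he : PPlace.loc Y θ k
                      = PPlace.loc (Rem.after (.fork e θ') X) θ k := by rw [h2]
                  exact hnp (Or.inl he)
                · exact absurd hpost (by simp)
              · rintro ⟨hSm, -⟩
                exact absurd hSm (Finset.notMem_erase _ _)
            · constructor
              · rintro (⟨hm', -⟩ | hpost)
                · obtain ⟨hSm, hFY⟩ := (h1 Y θ₂ k₂).mp hm'
                  exact ⟨Finset.mem_erase.mpr ⟨hp, hSm⟩, hFY⟩
                · exact absurd hpost (by simp)
              · rintro ⟨hSm, hFY⟩
                left
                refine ⟨(h1 Y θ₂ k₂).mpr ⟨(Finset.mem_erase.mp hSm).2, hFY⟩, ?_⟩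
                rintro (h | ⟨j, -, h⟩)
                · injection h with e1 e2 e3
                  exact hp (by rw [e2, e3])
                · exact absurd h (by simp)
          · intro θ₂ k₂ h2
            have hSm := (Finset.mem_erase.mp h2).2
            rintro (⟨hm2, -⟩ | hpost)
            · exact h3 θ₂ k₂ hSm hm2
            · exact absurd hpost (by simp)
      | join e X θ k θ' k' =>
          obtain ⟨S, F, rest, g, hReach, hg, h1, h3⟩ := ih
          obtain ⟨hσ', hid⟩ := hR
          rw [hσ']
          have hloc1 : PPlace.loc (Rem.after (.join e) X) θ k ∈ m := hsub (Or.inl rfl)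
          have hloc2 : PPlace.loc Rem.term θ' (some k') ∈ m :=
            hsub (Or.inr (Or.inl rfl))
          obtain ⟨hS1, hF1⟩ := (h1 _ θ k).mp hloc1
          obtain ⟨hS2, hF2⟩ := (h1 _ θ' (some k')).mp hloc2
          have hne : (θ, k) ≠ (θ', some k') := by
            intro h
            rw [h, hF2] at hF1
            exact Rem.after_ne_term hF1.symm
          set F' : T × Option (Fin β) → Rem T := Function.update F (θ, k) X with hF'def
          refine ⟨S.erase (θ', some k'), F', rest, g, ?_, hg, ?_, ?_⟩
          · -- reachability
            set E1 := S.val.erase (θ, k) with hE1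
            have hsplit1 : S.val = (θ, k) ::ₘ E1 := (Multiset.cons_erase hS1).symm
            have hmem2 : (θ', some k') ∈ E1 :=
              (Multiset.Nodup.mem_erase_iff S.nodup).mpr ⟨Ne.symm hne, hS2⟩
            set E2 := E1.erase (θ', some k') with hE2
            have hsplit2 : E1 = (θ', some k') ::ₘ E2 := (Multiset.cons_erase hmem2).symm
            set M₂ := E2.map (fun p => thr σ (F p) p.1 p.2) + rest with hM₂
            have hMold : S.val.map (fun p => thr σ (F p) p.1 p.2) + rest
                = (⟨Rem.after (.join e) X, θ, k.map (fun j => σ (.idv θ j)),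
                    fun x => σ (.inst x θ k)⟩ : LConf T) ::ₘ
                  (⟨.term, θ', some (e (P.comb g (fun x => σ (.inst x θ k)))),
                    fun x => σ (.inst x θ' (some k'))⟩ : LConf T) ::ₘ M₂ := by
              conv_lhs => rw [hsplit1, Multiset.map_cons, hsplit2, Multiset.map_cons]
              rw [hF1, hF2, Multiset.cons_add, Multiset.cons_add]
              congr 2
              unfold thr
              refine congrArg₂ _ ?_ rfl
              rw [comb_iev hg, ← hid]
              rfl
            have hEval : S.val.erase (θ', some k') = (θ, k) ::ₘ E2 := by
              rw [hsplit1, Multiset.erase_cons_tail _ hne, ← hE2]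
            have hMnew : (S.erase (θ', some k')).val.map
                  (fun p => thr σ (F' p) p.1 p.2) + rest
                = thr σ X θ k ::ₘ M₂ := by
              rw [Finset.erase_val, hEval, Multiset.map_cons]
              have : E2.map (fun p => thr σ (F' p) p.1 p.2)
                  = E2.map (fun p => thr σ (F p) p.1 p.2) := by
                refine Multiset.map_congr rfl ?_
                intro q hq
                have hq1 : q ≠ (θ, k) := by
                  have : q ∈ E1 := Multiset.mem_of_mem_erase (hE2 ▸ hq)
                  exact ((Multiset.Nodup.mem_erase_iff S.nodup).mp (hE1 ▸ this)).1
                rw [hF'def, Function.update_of_ne hq1]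
              rw [this, hF'def, Function.update_self, Multiset.cons_add]
            rw [hMnew]
            refine Reach.step (l := .joinL) hReach ?_
            rw [hMold]
            have hstep0 := Step.join (P := P) (e := e) (X := X) (θ := θ)
              (t := k.map fun j => σ (.idv θ j)) (s := fun x => σ (.inst x θ k))
              (θ' := θ') (s' := fun x => σ (.inst x θ' (some k'))) (g := g)
            have hstep1 := Step.frame (M₂ := M₂) hstep0
            simpa [Multiset.insert_eq_cons, Multiset.cons_add,
              Multiset.singleton_add, thr] using hstep1
          · -- place correspondence
            intro Y θ₂ k₂
            by_cases hp2 : (θ₂, k₂) = (θ', some k')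
            · rw [show θ₂ = θ' from congrArg Prod.fst hp2,
                show k₂ = some k' from congrArg Prod.snd hp2]
              constructor
              · rintro (⟨hm', hnp⟩ | hpost)
                · exfalso
                  have h2 := ((h1 _ _ _).mp hm').2
                  rw [hF2] at h2
                  have he : PPlace.loc Y θ' (some k')
                      = PPlace.loc Rem.term θ' (some k') := by rw [h2]
                  exact hnp (Or.inr (Or.inl he))
                · rcases hpost with h | h
                  · exfalso
                    injection h with e1 e2 e3
                    exact hne (by rw [e2, e3])
                  · exact absurd h (by simp)
              · rintro ⟨hSm, -⟩
                exact absurd hSm (Finset.notMem_erase _ _)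
            · by_cases hp1 : (θ₂, k₂) = (θ, k)
              · rw [show θ₂ = θ from congrArg Prod.fst hp1,
                  show k₂ = k from congrArg Prod.snd hp1]
                constructor
                · rintro (⟨hm', hnp⟩ | hpost)
                  · exfalso
                    have h2 := ((h1 _ _ _).mp hm').2
                    rw [hF1] at h2
                    have he : PPlace.loc Y θ k
                        = PPlace.loc (Rem.after (.join e) X) θ k := by rw [h2]
                    exact hnp (Or.inl he)
                  · rcases hpost with h | h
                    · injection h with e1 e2 e3
                      refine ⟨Finset.mem_erase.mpr ⟨hp1.symm ▸ hp2, hS1⟩, ?_⟩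
                      rw [hF'def, Function.update_self, e1]
                    · exact absurd h (by simp)
                · rintro ⟨-, hFY⟩
                  rw [hF'def, Function.update_self] at hFY
                  have he : PPlace.loc Y θ k = PPlace.loc X θ k := by rw [← hFY]
                  exact Or.inr (Or.inl he)
              · have hFeq : F' (θ₂, k₂) = F (θ₂, k₂) := by
                  rw [hF'def, Function.update_of_ne hp1]
                constructor
                · rintro (⟨hm', -⟩ | hpost)
                  · obtain ⟨hSm, hFY⟩ := (h1 Y θ₂ k₂).mp hm'
                    exact ⟨Finset.mem_erase.mpr ⟨hp2, hSm⟩, by rw [hFeq]; exact hFY⟩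
                  · exfalso
                    rcases hpost with h | h
                    · injection h with e1 e2 e3
                      exact hp1 (by rw [e2, e3])
                    · exact absurd h (by simp)
                · rintro ⟨hSm, hFY⟩
                  left
                  refine ⟨(h1 Y θ₂ k₂).mpr ⟨(Finset.mem_erase.mp hSm).2,
                    by rw [← hFeq]; exact hFY⟩, ?_⟩
                  rintro (h | h | h)
                  · injection h with e1 e2 e3
                    exact hp1 (by rw [e2, e3])
                  · injection h with e1 e2 e3
                    exact hp2 (by rw [e2, e3])
                  · exact absurd h (by simp)
          · -- notInUse freshness
            intro θ₂ k₂ h2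
            obtain ⟨hne2, hSm⟩ := Finset.mem_erase.mp h2
            rintro (⟨hm2, -⟩ | hpost)
            · exact h3 θ₂ k₂ hSm hm2
            · rcases hpost with h | h
              · exact absurd h (by simp)
              · injection h with e1 e2
                exact hne2 (by rw [e1, e2])

end Conc

open Conc in
/-- Completeness: if `prog` is correct, then for every thread limit `β`
the petrified program `P_β(prog)` satisfies its safety specification. -/
theorem petrification_complete {T : Type} [DecidableEq T] (P : Prog T)
    (hcorrect : Correct P) :
    ∀ β : ℕ, Satisfies P β (Ssafe T β) := by
  intro β
  rintro ⟨m, σ, hreach, p, hpm, hpS⟩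
  obtain ⟨θ, k, rfl⟩ := hpS
  obtain ⟨S, F, rest, g, hReach, -, h1, -⟩ := preach_inv hreach
  obtain ⟨hS, hF⟩ := (h1 _ θ k).mp hpm
  refine Reach.no_fail hcorrect hReach (c := thr σ (F (θ, k)) θ k) ?_ (by rw [hF]; rfl)
  refine Multiset.mem_add.mpr (Or.inl ?_)
  exact Multiset.mem_map.mpr ⟨(θ, k), hS, rfl⟩
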